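/- Let i : B → A be a k-linear X-functor from a diagonal k-linear category B to a k-linear category A. Fix x ∈ X and assume that A_{xx} is faithfully flat as a left B_x-module. Then for every family N ∈ D_k(X)_B of right B_x-modules, the unit map η^N_x : N_x → GF(N)_x = {Σ_i n_i ⊗ a_i ∈ N_x ⊗_{B_x} A_{xx} | Σ_i n_i ⊗ 1_x ⊗ a_i = Σ_i n_i ⊗ a_i ⊗ 1_x in N_x ⊗_{B_x} A_{xx} ⊗_{B_x} A_{xx}}, given by η^N_x(n) = n ⊗_{B_x} 1_x, is bijective. -/

import Mathlib

open TensorProduct BigOperators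
noncomputable section
namespace Paper
variable (k : Type) [CommRing k]

-- [CORE assumed]
structure KCat (X : Type) where
  M : X → X → Type
  [acg : ∀ x y, AddCommGroup (M x y)]
  [mod : ∀ x y, Module k (M x y)]
  mul : ∀ {x y z : X}, M x y → M y z → M x z
  one : ∀ x : X, M x x
  add_mul : ∀ {x y z : X} (a a' : M x y) (b : M y z), mul (a + a') b = mul a b + mul a' b
  smul_mul : ∀ {x y z : X} (c : k) (a : M x y) (b : M y z), mul (c • a) b = c • mul a b
  mul_add : ∀ {x y z : X} (a : M x y) (b b' : M y z), mul a (b + b') = mul a b + mul a b'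
  mul_smul : ∀ {x y z : X} (c : k) (a : M x y) (b : M y z), mul a (c • b) = c • mul a b
  mul_assoc : ∀ {x y z w : X} (a : M x y) (b : M y z) (c : M z w),
    mul (mul a b) c = mul a (mul b c)
  one_mul : ∀ {x y : X} (a : M x y), mul (one x) a = a
  mul_one : ∀ {x y : X} (a : M x y), mul a (one y) = a
attribute [instance] KCat.acg KCat.mod
variable {k}
def KCat.mulLin {X : Type} (A : KCat k X) (x y z : X) :
    A.M x y →ₗ[k] A.M y z →ₗ[k] A.M x z :=
  LinearMap.mk₂ k A.mul A.add_mul A.smul_mul A.mul_add A.mul_smul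
@[simp] theorem KCat.mulLin_apply {X : Type} (A : KCat k X) (x y z : X)
    (a : A.M x y) (b : A.M y z) : A.mulLin x y z a b = A.mul a b := rfl
variable (k)
def relSub {S M N : Type} [AddCommGroup M] [Module k M] [AddCommGroup N] [Module k N]
    (ρ : M → S → M) (lam : S → N → N) : Submodule k (M ⊗[k] N) :=
  Submodule.span k {t | ∃ m b n, t = ρ m b ⊗ₜ[k] n - m ⊗ₜ[k] lam b n}
abbrev BT {S M N : Type} [AddCommGroup M] [Module k M] [AddCommGroup N] [Module k N]
    (ρ : M → S → M) (lam : S → N → N) : Type :=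
  (M ⊗[k] N) ⧸ relSub k ρ lam
def btmk {S M N : Type} [AddCommGroup M] [Module k M] [AddCommGroup N] [Module k N]
    (ρ : M → S → M) (lam : S → N → N) : M →ₗ[k] N →ₗ[k] BT k ρ lam :=
  (TensorProduct.mk k M N).compr₂ (relSub k ρ lam).mkQ
theorem btmk_rel {S M N : Type} [AddCommGroup M] [Module k M] [AddCommGroup N] [Module k N]
    (ρ : M → S → M) (lam : S → N → N) (m : M) (b : S) (n : N) :
    btmk k ρ lam (ρ m b) n = btmk k ρ lam m (lam b n) := by
  show (relSub k ρ lam).mkQ _ = (relSub k ρ lam).mkQ _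
  rw [Submodule.mkQ_apply, Submodule.mkQ_apply, Submodule.Quotient.eq]
  exact Submodule.subset_span ⟨m, b, n, rfl⟩
def btDesc {S M N P : Type} [AddCommGroup M] [Module k M] [AddCommGroup N] [Module k N]
    [AddCommGroup P] [Module k P]
    (ρ : M → S → M) (lam : S → N → N) (f : M →ₗ[k] N →ₗ[k] P)
    (hf : ∀ m b n, f (ρ m b) n = f m (lam b n)) :
    BT k ρ lam →ₗ[k] P :=
  Submodule.liftQ _ (TensorProduct.lift f) (by
    rw [relSub, Submodule.span_le]
    rintro t ⟨m, b, n, rfl⟩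
    simp [SetLike.mem_coe, LinearMap.mem_ker, map_sub, hf m b n])
@[simp] theorem btDesc_mk {S M N P : Type} [AddCommGroup M] [Module k M] [AddCommGroup N]
    [Module k N] [AddCommGroup P] [Module k P]
    (ρ : M → S → M) (lam : S → N → N) (f : M →ₗ[k] N →ₗ[k] P)
    (hf : ∀ m b n, f (ρ m b) n = f m (lam b n)) (m : M) (n : N) :
    btDesc k ρ lam f hf (btmk k ρ lam m n) = f m n := by
  simp [btDesc, btmk, LinearMap.compr₂_apply, TensorProduct.mk_apply]
-- [END CORE]

/-- A diagonal `k`-linear category: a family of (not necessarily commutative,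
associative, unital) `k`-algebras indexed by `X`. -/
structure DiagAlg (X : Type) where
  C : X → Type
  [acg : ∀ x, AddCommGroup (C x)]
  [mod : ∀ x, Module k (C x)]
  mul : ∀ {x : X}, C x → C x → C x
  one : ∀ x : X, C x
  add_mul : ∀ {x : X} (a a' b : C x), mul (a + a') b = mul a b + mul a' b
  smul_mul : ∀ {x : X} (c : k) (a b : C x), mul (c • a) b = c • mul a b
  mul_add : ∀ {x : X} (a b b' : C x), mul a (b + b') = mul a b + mul a b'
  mul_smul : ∀ {x : X} (c : k) (a b : C x), mul a (c • b) = c • mul a b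
  mul_assoc : ∀ {x : X} (a b c : C x), mul (mul a b) c = mul a (mul b c)
  one_mul : ∀ {x : X} (a : C x), mul (one x) a = a
  mul_one : ∀ {x : X} (a : C x), mul a (one x) = a

attribute [instance] DiagAlg.acg DiagAlg.mod

variable {k}

/-- A `k`-linear `X`-functor from a diagonal category `B` to `A`: a family of
`k`-algebra maps `i x : B x → A x x`. -/
structure XFun {X : Type} (B : DiagAlg k X) (A : KCat k X) where
  i : ∀ x, B.C x →ₗ[k] A.M x x
  i_mul : ∀ x (b b' : B.C x), i x (B.mul b b') = A.mul (i x b) (i x b')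
  i_one : ∀ x, i x (B.one x) = A.one x

/-- A family of right `B_x`-modules (an object of `D_k(X)` with right `B`-action). -/
structure DModData {X : Type} (B : DiagAlg k X) where
  N : X → Type
  [acg : ∀ x, AddCommGroup (N x)]
  [mod : ∀ x, Module k (N x)]
  ract : ∀ {x : X}, N x → B.C x → N x

attribute [instance] DModData.acg DModData.mod

/-- The axioms making `Nd` an object of `D_k(X)_B`. -/
structure IsDMod {X : Type} {B : DiagAlg k X} (Nd : DModData B) : Prop where
  add_ract : ∀ {x : X} (n n' : Nd.N x) (b : B.C x), Nd.ract (n + n') b = Nd.ract n b + Nd.ract n' b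
  ract_add : ∀ {x : X} (n : Nd.N x) (b b' : B.C x), Nd.ract n (b + b') = Nd.ract n b + Nd.ract n b'
  smul_ract : ∀ {x : X} (c : k) (n : Nd.N x) (b : B.C x), Nd.ract (c • n) b = c • Nd.ract n b
  ract_smul : ∀ {x : X} (c : k) (n : Nd.N x) (b : B.C x), Nd.ract n (c • b) = c • Nd.ract n b
  ract_assoc : ∀ {x : X} (n : Nd.N x) (b b' : B.C x),
    Nd.ract (Nd.ract n b) b' = Nd.ract n (B.mul b b')
  ract_one : ∀ {x : X} (n : Nd.N x), Nd.ract n (B.one x) = n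

/-- Morphisms in `D_k(X)_B`. -/
structure IsDModHom {X : Type} {B : DiagAlg k X} (Nd Nd' : DModData B)
    (g : ∀ x, Nd.N x → Nd'.N x) : Prop where
  map_add : ∀ x (n n' : Nd.N x), g x (n + n') = g x n + g x n'
  map_smul : ∀ x (c : k) (n : Nd.N x), g x (c • n) = c • g x n
  map_ract : ∀ x (n : Nd.N x) (b : B.C x), g x (Nd.ract n b) = Nd'.ract (g x n) b

/-- A right module (in `M_k(X)`) over the `k`-linear category `A` (data only). -/
structure RModData {X : Type} (A : KCat k X) where
  M : X → X → Type
  [acg : ∀ x y, AddCommGroup (M x y)]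
  [mod : ∀ x y, Module k (M x y)]
  act : ∀ {x y z : X}, M x y → A.M y z → M x z

attribute [instance] RModData.acg RModData.mod

/-- The axioms of a right `A`-module. -/
structure IsRMod {X : Type} {A : KCat k X} (Md : RModData A) : Prop where
  add_act : ∀ {x y z : X} (m m' : Md.M x y) (a : A.M y z), Md.act (m + m') a = Md.act m a + Md.act m' a
  act_add : ∀ {x y z : X} (m : Md.M x y) (a a' : A.M y z), Md.act m (a + a') = Md.act m a + Md.act m a'
  smul_act : ∀ {x y z : X} (c : k) (m : Md.M x y) (a : A.M y z), Md.act (c • m) a = c • Md.act m a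
  act_smul : ∀ {x y z : X} (c : k) (m : Md.M x y) (a : A.M y z), Md.act m (c • a) = c • Md.act m a
  act_assoc : ∀ {x y z w : X} (m : Md.M x y) (a : A.M y z) (b : A.M z w),
    Md.act (Md.act m a) b = Md.act m (A.mul a b)
  act_one : ∀ {x y : X} (m : Md.M x y), Md.act m (A.one y) = m

/-- Morphisms of right `A`-modules. -/
structure IsRModHom {X : Type} {A : KCat k X} (Md Md' : RModData A)
    (f : ∀ x y, Md.M x y → Md'.M x y) : Prop where
  map_add : ∀ x y (m m' : Md.M x y), f x y (m + m') = f x y m + f x y m'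
  map_smul : ∀ x y (c : k) (m : Md.M x y), f x y (c • m) = c • f x y m
  map_act : ∀ x y z (m : Md.M x y) (a : A.M y z), f x z (Md.act m a) = Md'.act (f x y m) a

section Descent

variable {X : Type} (A : KCat k X) (B : DiagAlg k X) (F : XFun B A)

/-- `M_{xx} ⊗_{B_x} A_{xy}`, for a right `A`-module `M`, where `B` acts via `i = F.i`. -/
abbrev DTc (Md : RModData A) (x y : X) : Type :=
  BT k (fun (m : Md.M x x) (b : B.C x) => Md.act m (F.i x b))
       (fun (b : B.C x) (a : A.M x y) => A.mul (F.i x b) a)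

abbrev dtmk (Md : RModData A) (x y : X) :
    Md.M x x →ₗ[k] A.M x y →ₗ[k] DTc A B F Md x y :=
  btmk k _ _

/-- Right multiplication by `a : A_{yz}` on the second factor of `M_{xx} ⊗_{B_x} A_{xy}`. -/
def dtRmul (Md : RModData A) {x y z : X} (a : A.M y z) :
    DTc A B F Md x y →ₗ[k] DTc A B F Md x z :=
  btDesc k _ _ ((dtmk A B F Md x z).compl₂ ((A.mulLin x y z).flip a)) (by
    intro m b a'
    simp only [LinearMap.compl₂_apply, LinearMap.flip_apply, KCat.mulLin_apply]
    rw [A.mul_assoc]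
    exact btmk_rel k _ _ m b (A.mul a' a))

@[simp] theorem dtRmul_mk (Md : RModData A) {x y z : X} (a : A.M y z)
    (m : Md.M x x) (a' : A.M x y) :
    dtRmul A B F Md a (dtmk A B F Md x y m a') = dtmk A B F Md x z m (A.mul a' a) := by
  simp [dtRmul]

/-- `(M_{xx} ⊗_{B_x} A_{xx}) ⊗_{B_x} A_{xy}`. -/
abbrev DT2c (Md : RModData A) (x y : X) : Type :=
  BT k (fun (t : DTc A B F Md x x) (b : B.C x) => dtRmul A B F Md (F.i x b) t)
       (fun (b : B.C x) (a : A.M x y) => A.mul (F.i x b) a)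

abbrev dt2mk (Md : RModData A) (x y : X) :
    DTc A B F Md x x →ₗ[k] A.M x y →ₗ[k] DT2c A B F Md x y :=
  btmk k _ _

/-- A descent datum: a right `A`-module together with the maps `σ_{xy}`. -/
structure DescData where
  Md : RModData A
  sig : ∀ (x y : X), Md.M x y → DTc A B F Md x y

/-- The axioms of a descent datum.  The conditions `c2` and `c3` are expressed via
(arbitrary) representatives `σ_{xy}(m) = ∑ⱼ m0 j ⊗ m1 j` of the element `σ_{xy}(m)`
of the balanced tensor product. -/
structure IsDesc (D : DescData A B F) : Prop where
  mod : IsRMod D.Md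
  sig_add : ∀ x y (m m' : D.Md.M x y), D.sig x y (m + m') = D.sig x y m + D.sig x y m'
  sig_smul : ∀ x y (c : k) (m : D.Md.M x y), D.sig x y (c • m) = c • D.sig x y m
  c1 : ∀ x y z (m : D.Md.M x y) (a : A.M y z),
    D.sig x z (D.Md.act m a) = dtRmul A B F D.Md a (D.sig x y m)
  c2 : ∀ x y (m : D.Md.M x y) (n : ℕ) (m0 : Fin n → D.Md.M x x) (m1 : Fin n → A.M x y),
    D.sig x y m = ∑ j, dtmk A B F D.Md x y (m0 j) (m1 j) →
    ∑ j, dt2mk A B F D.Md x y (D.sig x x (m0 j)) (m1 j)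
      = ∑ j, dt2mk A B F D.Md x y (dtmk A B F D.Md x x (m0 j) (A.one x)) (m1 j)
  c3 : ∀ x y (m : D.Md.M x y) (n : ℕ) (m0 : Fin n → D.Md.M x x) (m1 : Fin n → A.M x y),
    D.sig x y m = ∑ j, dtmk A B F D.Md x y (m0 j) (m1 j) →
    ∑ j, D.Md.act (m0 j) (m1 j) = m

/-- Morphisms of descent data. -/
structure IsDescHom (D D' : DescData A B F) (f : ∀ x y, D.Md.M x y → D'.Md.M x y) : Prop where
  mod : IsRModHom D.Md D'.Md f
  compat : ∀ x y (m : D.Md.M x y) (n : ℕ) (m0 : Fin n → D.Md.M x x) (m1 : Fin n → A.M x y),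
    D.sig x y m = ∑ j, dtmk A B F D.Md x y (m0 j) (m1 j) →
    D'.sig x y (f x y m) = ∑ j, dtmk A B F D'.Md x y (f x x (m0 j)) (m1 j)

/-- `G(M)_x = { m ∈ M_{xx} | σ_{xx}(m) = m ⊗ 1_x }`. -/
def Gset (D : DescData A B F) (x : X) : Set (D.Md.M x x) :=
  {m | D.sig x x m = dtmk A B F D.Md x x m (A.one x)}

/-- `N_x ⊗_{B_x} A_{xy}` for a diagonal right `B`-module `N`. -/
abbrev FTc (Nd : DModData B) (x y : X) : Type :=
  BT k (fun (n : Nd.N x) (b : B.C x) => Nd.ract n b)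
       (fun (b : B.C x) (a : A.M x y) => A.mul (F.i x b) a)

abbrev ftmk (Nd : DModData B) (x y : X) :
    Nd.N x →ₗ[k] A.M x y →ₗ[k] FTc A B F Nd x y :=
  btmk k _ _

/-- The right `A`-action `(n ⊗ a)·b := n ⊗ ab` on `F(N)`. -/
def ftRmul (Nd : DModData B) {x y z : X} (a : A.M y z) :
    FTc A B F Nd x y →ₗ[k] FTc A B F Nd x z :=
  btDesc k _ _ ((ftmk A B F Nd x z).compl₂ ((A.mulLin x y z).flip a)) (by
    intro m b a'
    simp only [LinearMap.compl₂_apply, LinearMap.flip_apply, KCat.mulLin_apply]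
    rw [A.mul_assoc]
    exact btmk_rel k _ _ m b (A.mul a' a))

@[simp] theorem ftRmul_mk (Nd : DModData B) {x y z : X} (a : A.M y z)
    (n : Nd.N x) (a' : A.M x y) :
    ftRmul A B F Nd a (ftmk A B F Nd x y n a') = ftmk A B F Nd x z n (A.mul a' a) := by
  simp [ftRmul]

/-- The right `A`-module `F(N)`. -/
def FNMod (Nd : DModData B) : RModData A where
  M := FTc A B F Nd
  act := fun {x y z} t a => ftRmul A B F Nd a t

@[simp] theorem FNMod_act (Nd : DModData B) {x y z : X} (t : FTc A B F Nd x y) (a : A.M y z) :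
    (FNMod A B F Nd).act t a = ftRmul A B F Nd a t := rfl

/-- `n ↦ n ⊗ 1_x` as a linear map `N_x → F(N)_{xx}`. -/
def etaLin (Nd : DModData B) (x : X) : Nd.N x →ₗ[k] FTc A B F Nd x x where
  toFun := fun n => ftmk A B F Nd x x n (A.one x)
  map_add' := by intro n n'; simp [map_add]
  map_smul' := by intro c n; simp [map_smul]

@[simp] theorem etaLin_apply (Nd : DModData B) (x : X) (n : Nd.N x) :
    etaLin A B F Nd x n = ftmk A B F Nd x x n (A.one x) := rfl

/-- The descent map `σ_{xy}(n ⊗ a) = (n ⊗ 1_x) ⊗ a` of `F(N)`. -/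
def FNsig (Nd : DModData B) (x y : X) :
    FTc A B F Nd x y →ₗ[k] DTc A B F (FNMod A B F Nd) x y :=
  btDesc k (fun (n : Nd.N x) (b : B.C x) => Nd.ract n b)
    (fun (b : B.C x) (a : A.M x y) => A.mul (F.i x b) a)
    ((dtmk A B F (FNMod A B F Nd) x y).comp (etaLin A B F Nd x)) (by
    intro n b a
    show (dtmk A B F (FNMod A B F Nd) x y) (ftmk A B F Nd x x (Nd.ract n b) (A.one x)) a
      = (dtmk A B F (FNMod A B F Nd) x y) (ftmk A B F Nd x x n (A.one x)) (A.mul (F.i x b) a)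
    rw [btmk_rel k _ _ n b (A.one x), A.mul_one]
    have h2 := btmk_rel k
      (fun (t : (FNMod A B F Nd).M x x) (b : B.C x) => (FNMod A B F Nd).act t (F.i x b))
      (fun (b : B.C x) (a : A.M x y) => A.mul (F.i x b) a)
      (ftmk A B F Nd x x n (A.one x)) b a
    rw [← h2]
    have h3 : (FNMod A B F Nd).act (ftmk A B F Nd x x n (A.one x)) (F.i x b)
        = ftmk A B F Nd x x n (F.i x b) := by
      show ftRmul A B F Nd (F.i x b) (ftmk A B F Nd x x n (A.one x)) = _
      rw [ftRmul_mk, A.one_mul]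
    rw [h3])

@[simp] theorem FNsig_mk (Nd : DModData B) (x y : X) (n : Nd.N x) (a : A.M x y) :
    FNsig A B F Nd x y (ftmk A B F Nd x y n a)
      = dtmk A B F (FNMod A B F Nd) x y (ftmk A B F Nd x x n (A.one x)) a := rfl

/-- The descent datum `F(N)`. -/
def FNDesc (Nd : DModData B) : DescData A B F where
  Md := FNMod A B F Nd
  sig := fun x y t => FNsig A B F Nd x y t

end Descent

section MapLeft

variable {X : Type}

/-- `g ⊗ id` on balanced tensor products. -/
def btMapLeft {S N N' Q : Type} [AddCommGroup N] [Module k N] [AddCommGroup N'] [Module k N']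
    [AddCommGroup Q] [Module k Q]
    (ρ : N → S → N) (ρ' : N' → S → N') (lam : S → Q → Q)
    (g : N →ₗ[k] N') (hg : ∀ n b, g (ρ n b) = ρ' (g n) b) :
    BT k ρ lam →ₗ[k] BT k ρ' lam :=
  btDesc k ρ lam ((btmk k ρ' lam).comp g) (by
    intro n b q
    simp only [LinearMap.comp_apply, hg]
    exact btmk_rel k ρ' lam (g n) b q)

@[simp] theorem btMapLeft_mk {S N N' Q : Type} [AddCommGroup N] [Module k N] [AddCommGroup N']
    [Module k N'] [AddCommGroup Q] [Module k Q]
    (ρ : N → S → N) (ρ' : N' → S → N') (lam : S → Q → Q)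
    (g : N →ₗ[k] N') (hg : ∀ n b, g (ρ n b) = ρ' (g n) b) (n : N) (q : Q) :
    btMapLeft ρ ρ' lam g hg (btmk k ρ lam n q) = btmk k ρ' lam (g n) q := by
  simp [btMapLeft]

end MapLeft

section Descent2

variable {X : Type} (A : KCat k X) (B : DiagAlg k X) (F : XFun B A)

/-- `F(g) = g ⊗ A` for a morphism `g` of diagonal modules. -/
def FNMap (Nd Nd' : DModData B) (g : ∀ x, Nd.N x →ₗ[k] Nd'.N x)
    (hg : ∀ x (n : Nd.N x) (b : B.C x), g x (Nd.ract n b) = Nd'.ract (g x n) b)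
    (x y : X) : FTc A B F Nd x y →ₗ[k] FTc A B F Nd' x y :=
  btMapLeft _ _ _ (g x) (hg x)

/-- `G(M)_x` as a `k`-submodule of `M_{xx}`. -/
def Gsub (D : DescData A B F) (hD : IsDesc A B F D) (x : X) :
    Submodule k (D.Md.M x x) where
  carrier := Gset A B F D x
  add_mem' := by
    intro a b ha hb
    simp only [Gset, Set.mem_setOf_eq] at *
    rw [hD.sig_add, ha, hb]
    simp [map_add]
  zero_mem' := by
    have h0 : D.sig x x (0 : D.Md.M x x) = 0 := by
      have := hD.sig_smul x x (0 : k) 0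
      simpa using this
    simp only [Gset, Set.mem_setOf_eq, h0, map_zero, LinearMap.zero_apply]
  smul_mem' := by
    intro c m hm
    simp only [Gset, Set.mem_setOf_eq] at *
    rw [hD.sig_smul, hm]
    simp [map_smul]

theorem Gsub_closed (D : DescData A B F) (hD : IsDesc A B F D) (x : X)
    (m : D.Md.M x x) (hm : m ∈ Gsub A B F D hD x) (b : B.C x) :
    D.Md.act m (F.i x b) ∈ Gsub A B F D hD x := by
  have hm' : D.sig x x m = dtmk A B F D.Md x x m (A.one x) := hm
  show D.sig x x (D.Md.act m (F.i x b)) = dtmk A B F D.Md x x (D.Md.act m (F.i x b)) (A.one x)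
  rw [hD.c1, hm', dtRmul_mk, A.one_mul]
  rw [btmk_rel k (fun (m : D.Md.M x x) (b : B.C x) => D.Md.act m (F.i x b))
      (fun (b : B.C x) (a : A.M x x) => A.mul (F.i x b) a) m b (A.one x), A.mul_one]

/-- `G(M)` as a diagonal right `B`-module. -/
def GMod (D : DescData A B F) (hD : IsDesc A B F D) : DModData B where
  N := fun x => ↥(Gsub A B F D hD x)
  ract := fun {x} m b => ⟨D.Md.act m.1 (F.i x b), Gsub_closed A B F D hD x m.1 m.2 b⟩

/-- The counit `ε^M : G(M)_x ⊗_{B_x} A_{xy} → M_{xy}`, `m ⊗ a ↦ ma`. -/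
def epsMap (D : DescData A B F) (hD : IsDesc A B F D) (x y : X) :
    FTc A B F (GMod A B F D hD) x y →ₗ[k] D.Md.M x y :=
  btDesc k
    (fun (m : ↥(Gsub A B F D hD x)) (b : B.C x) =>
      (⟨D.Md.act m.1 (F.i x b), Gsub_closed A B F D hD x m.1 m.2 b⟩ : ↥(Gsub A B F D hD x)))
    (fun (b : B.C x) (a : A.M x y) => A.mul (F.i x b) a)
    (LinearMap.mk₂ k (fun (m : ↥(Gsub A B F D hD x)) (a : A.M x y) => D.Md.act m.1 a)
      (by intro m m' a; exact hD.mod.add_act m.1 m'.1 a)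
      (by intro c m a; exact hD.mod.smul_act c m.1 a)
      (by intro m a a'; exact hD.mod.act_add m.1 a a')
      (by intro c m a; exact hD.mod.act_smul c m.1 a))
    (by intro m b a; exact hD.mod.act_assoc m.1 (F.i x b) a)

@[simp] theorem epsMap_mk (D : DescData A B F) (hD : IsDesc A B F D) (x y : X)
    (m : ↥(Gsub A B F D hD x)) (a : A.M x y) :
    epsMap A B F D hD x y (ftmk A B F (GMod A B F D hD) x y m a) = D.Md.act m.1 a := rfl

/-- The unit `η^N_x : N_x → F(N)_{xx}`, `n ↦ n ⊗ 1_x` (its corestriction to `GF(N)` is the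
unit of the adjunction). -/
def etaMap (Nd : DModData B) (x : X) : Nd.N x → FTc A B F Nd x x :=
  fun n => ftmk A B F Nd x x n (A.one x)

end Descent2

section Flat

variable {X : Type} (B : DiagAlg k X)

/-- The axioms of a right module over the `k`-algebra `B_x`. -/
def IsRModOver (x : X) (N : Type) [AddCommGroup N] [Module k N] (ρ : N → B.C x → N) : Prop :=
  (∀ n n' b, ρ (n + n') b = ρ n b + ρ n' b) ∧
  (∀ n b b', ρ n (b + b') = ρ n b + ρ n b') ∧
  (∀ (c : k) n b, ρ (c • n) b = c • ρ n b) ∧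
  (∀ (c : k) n b, ρ n (c • b) = c • ρ n b) ∧
  (∀ n b b', ρ (ρ n b) b' = ρ n (B.mul b b')) ∧
  (∀ n, ρ n (B.one x) = n)

/-- `Q` (with left `B_x`-action `lam`) is flat as a left `B_x`-module:  `- ⊗_{B_x} Q`
preserves injectivity of morphisms of right `B_x`-modules. -/
def LeftFlat (x : X) (Q : Type) [AddCommGroup Q] [Module k Q] (lam : B.C x → Q → Q) : Prop :=
  ∀ (N N' : Type) [AddCommGroup N] [Module k N] [AddCommGroup N'] [Module k N']
    (ρ : N → B.C x → N) (ρ' : N' → B.C x → N'),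
    IsRModOver B x N ρ → IsRModOver B x N' ρ' →
    ∀ (g : N →ₗ[k] N') (hg : ∀ n b, g (ρ n b) = ρ' (g n) b),
      Function.Injective g → Function.Injective (btMapLeft ρ ρ' lam g hg)

/-- `Q` is faithfully flat as a left `B_x`-module: it is flat, and `N ⊗_{B_x} Q = 0`
forces `N = 0`. -/
def LeftFaithfullyFlat (x : X) (Q : Type) [AddCommGroup Q] [Module k Q]
    (lam : B.C x → Q → Q) : Prop :=
  LeftFlat B x Q lam ∧
  ∀ (N : Type) [AddCommGroup N] [Module k N] (ρ : N → B.C x → N), IsRModOver B x N ρ →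
    (∀ t : BT k ρ lam, t = 0) → ∀ n : N, n = 0

end Flat

section Incl

variable {X : Type} (A : KCat k X) (B : DiagAlg k X) (F : XFun B A)

/-- The inclusion `G(M)_x ⊗_{B_x} A_{xy} → M_{xx} ⊗_{B_x} A_{xy}`. -/
def inclMap (D : DescData A B F) (hD : IsDesc A B F D) (x y : X) :
    FTc A B F (GMod A B F D hD) x y →ₗ[k] DTc A B F D.Md x y :=
  btMapLeft (fun (m : (GMod A B F D hD).N x) (b : B.C x) => (GMod A B F D hD).ract m b)
    (fun (m : D.Md.M x x) (b : B.C x) => D.Md.act m (F.i x b))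
    (fun (b : B.C x) (a : A.M x y) => A.mul (F.i x b) a)
    (Gsub A B F D hD x).subtype (fun n b => rfl)

end Incl


section Stmt2Aux

theorem bt_hom_ext {S M N P : Type} [AddCommGroup M] [Module k M] [AddCommGroup N] [Module k N]
    [AddCommGroup P] [Module k P] {ρ : M → S → M} {lam : S → N → N}
    {f g : BT k ρ lam →ₗ[k] P}
    (h : ∀ m n, f (btmk k ρ lam m n) = g (btmk k ρ lam m n)) : f = g := by
  refine Submodule.linearMap_qext _ (TensorProduct.ext' ?_)
  intro m n
  exact h m n

theorem bt_induction {S M N : Type} [AddCommGroup M] [Module k M] [AddCommGroup N] [Module k N]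
    {ρ : M → S → M} {lam : S → N → N} {p : BT k ρ lam → Prop} (h0 : p 0)
    (hmk : ∀ m n, p (btmk k ρ lam m n))
    (hadd : ∀ s t, p s → p t → p (s + t)) : ∀ t, p t := by
  intro t
  obtain ⟨s, rfl⟩ := Submodule.mkQ_surjective _ t
  induction s using TensorProduct.induction_on with
  | zero => simpa using h0
  | tmul m n => exact hmk m n
  | add s t hs ht => rw [map_add]; exact hadd _ _ hs ht

theorem bt_zero_of_gens {S M N : Type} [AddCommGroup M] [Module k M] [AddCommGroup N]
    [Module k N] {ρ : M → S → M} {lam : S → N → N}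
    (h : ∀ m n, btmk k ρ lam m n = 0) : ∀ t : BT k ρ lam, t = 0 :=
  bt_induction rfl h (fun s t hs ht => by rw [hs, ht, add_zero])

variable {X : Type} (A : KCat k X) (B : DiagAlg k X) (F : XFun B A) (x : X)

/-- Generic right multiplication by `a : A_{xx}` on the second factor of a balanced
tensor product `M ⊗_{B_x} A_{xx}`. -/
def bRmul {M : Type} [AddCommGroup M] [Module k M] (ρ : M → B.C x → M) (a : A.M x x) :
    BT k ρ (fun (b : B.C x) (a : A.M x x) => A.mul (F.i x b) a) →ₗ[k]
      BT k ρ (fun (b : B.C x) (a : A.M x x) => A.mul (F.i x b) a) :=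
  btDesc k _ _
    ((btmk k ρ (fun (b : B.C x) (a : A.M x x) => A.mul (F.i x b) a)).compl₂
      ((A.mulLin x x x).flip a)) (by
    intro m b a'
    simp only [LinearMap.compl₂_apply, LinearMap.flip_apply, KCat.mulLin_apply]
    rw [A.mul_assoc]
    exact btmk_rel k _ _ m b (A.mul a' a))

@[simp] theorem bRmul_mk {M : Type} [AddCommGroup M] [Module k M] (ρ : M → B.C x → M)
    (a : A.M x x) (m : M) (a' : A.M x x) :
    bRmul A B F x ρ a (btmk k ρ (fun (b : B.C x) (a : A.M x x) => A.mul (F.i x b) a) m a')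
      = btmk k ρ (fun (b : B.C x) (a : A.M x x) => A.mul (F.i x b) a) m (A.mul a' a) := by
  simp [bRmul]

theorem bRmul_addr {M : Type} [AddCommGroup M] [Module k M] (ρ : M → B.C x → M)
    (a a' : A.M x x) :
    bRmul A B F x ρ (a + a') = bRmul A B F x ρ a + bRmul A B F x ρ a' := by
  apply bt_hom_ext
  intro m c
  simp [A.mul_add, map_add]

theorem bRmul_smulr {M : Type} [AddCommGroup M] [Module k M] (ρ : M → B.C x → M)
    (c : k) (a : A.M x x) :
    bRmul A B F x ρ (c • a) = c • bRmul A B F x ρ a := by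
  apply bt_hom_ext
  intro m c'
  simp [A.mul_smul, map_smul]

theorem bRmul_mul {M : Type} [AddCommGroup M] [Module k M] (ρ : M → B.C x → M)
    (a a' : A.M x x) (t) :
    bRmul A B F x ρ a' (bRmul A B F x ρ a t) = bRmul A B F x ρ (A.mul a a') t := by
  refine LinearMap.congr_fun (f := (bRmul A B F x ρ a').comp (bRmul A B F x ρ a))
    (g := bRmul A B F x ρ (A.mul a a')) (bt_hom_ext ?_) t
  intro m c
  simp [A.mul_assoc]

theorem bRmul_one {M : Type} [AddCommGroup M] [Module k M] (ρ : M → B.C x → M) (t) :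
    bRmul A B F x ρ (A.one x) t = t := by
  refine LinearMap.congr_fun (f := bRmul A B F x ρ (A.one x)) (g := LinearMap.id)
    (bt_hom_ext ?_) t
  intro m c
  simp [A.mul_one]

theorem bRmul_isRModOver {M : Type} [AddCommGroup M] [Module k M] (ρ : M → B.C x → M) :
    IsRModOver B x (BT k ρ (fun (b : B.C x) (a : A.M x x) => A.mul (F.i x b) a))
      (fun t b => bRmul A B F x ρ (F.i x b) t) := by
  refine ⟨?_, ?_, ?_, ?_, ?_, ?_⟩
  · intro n n' b; exact map_add _ _ _
  · intro n b b'
    show bRmul A B F x ρ (F.i x (b + b')) n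
      = bRmul A B F x ρ (F.i x b) n + bRmul A B F x ρ (F.i x b') n
    rw [map_add (F.i x), bRmul_addr]; rfl
  · intro c n b; exact map_smul _ _ _
  · intro c n b
    show bRmul A B F x ρ (F.i x (c • b)) n = c • bRmul A B F x ρ (F.i x b) n
    rw [map_smul (F.i x), bRmul_smulr]; rfl
  · intro n b b'
    show bRmul A B F x ρ (F.i x b') (bRmul A B F x ρ (F.i x b) n)
      = bRmul A B F x ρ (F.i x (B.mul b b')) n
    rw [F.i_mul, ← bRmul_mul]
  · intro n
    show bRmul A B F x ρ (F.i x (B.one x)) n = n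
    rw [F.i_one, bRmul_one]

theorem isRModOver_sub {M : Type} [AddCommGroup M] [Module k M] {ρ : M → B.C x → M}
    (hρ : IsRModOver B x M ρ) (P : Submodule k M) (hP : ∀ m ∈ P, ∀ b, ρ m b ∈ P) :
    IsRModOver B x P (fun m b => ⟨ρ m.1 b, hP m.1 m.2 b⟩) := by
  obtain ⟨h1, h2, h3, h4, h5, h6⟩ := hρ
  exact ⟨fun n n' b => Subtype.ext (h1 _ _ _), fun n b b' => Subtype.ext (h2 _ _ _),
    fun c n b => Subtype.ext (h3 _ _ _), fun c n b => Subtype.ext (h4 _ _ _),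
    fun n b b' => Subtype.ext (h5 _ _ _), fun n => Subtype.ext (h6 _)⟩

variable (Nd : DModData B)

theorem ftRmul_eq_bRmul (a : A.M x x) (t : FTc A B F Nd x x) :
    ftRmul A B F Nd a t = bRmul A B F x (fun n b => Nd.ract n b) a t := by
  refine LinearMap.congr_fun (f := ftRmul A B F Nd a)
    (g := bRmul A B F x (fun n b => Nd.ract n b) a) (bt_hom_ext ?_) t
  intro n c
  show ftRmul A B F Nd a (ftmk A B F Nd x x n c)
    = bRmul A B F x (fun n b => Nd.ract n b) a (ftmk A B F Nd x x n c)
  rw [ftRmul_mk, bRmul_mk]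

theorem dtRmul_eq_bRmul (a : A.M x x) (t : DTc A B F (FNMod A B F Nd) x x) :
    dtRmul A B F (FNMod A B F Nd) a t
      = bRmul A B F x (fun m b => (FNMod A B F Nd).act m (F.i x b)) a t := by
  refine LinearMap.congr_fun (f := dtRmul A B F (FNMod A B F Nd) a)
    (g := bRmul A B F x (fun m b => (FNMod A B F Nd).act m (F.i x b)) a) (bt_hom_ext ?_) t
  intro m c
  show dtRmul A B F (FNMod A B F Nd) a (dtmk A B F (FNMod A B F Nd) x x m c)
    = bRmul A B F x (fun m b => (FNMod A B F Nd).act m (F.i x b)) a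
        (dtmk A B F (FNMod A B F Nd) x x m c)
  rw [dtRmul_mk, bRmul_mk]

theorem eta_blin (n : Nd.N x) (b : B.C x) :
    etaLin A B F Nd x (Nd.ract n b)
      = (FNMod A B F Nd).act (etaLin A B F Nd x n) (F.i x b) := by
  simp only [etaLin_apply, FNMod_act, ftRmul_mk, A.one_mul]
  rw [← A.mul_one (F.i x b)]
  exact btmk_rel k _ _ n b (A.one x)

/-- `t ↦ t ⊗ 1` as a map `N ⊗ A → N ⊗ A ⊗ A`. -/
def dOne : FTc A B F Nd x x →ₗ[k] DTc A B F (FNMod A B F Nd) x x :=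
  (dtmk A B F (FNMod A B F Nd) x x).flip (A.one x)

/-- The map `d : N ⊗ A → N ⊗ A ⊗ A`, `t ↦ σ(t) - t ⊗ 1`. -/
def dMap : FTc A B F Nd x x →ₗ[k] DTc A B F (FNMod A B F Nd) x x :=
  FNsig A B F Nd x x - dOne A B F x Nd

@[simp] theorem dMap_mk (n : Nd.N x) (a : A.M x x) :
    dMap A B F x Nd (ftmk A B F Nd x x n a)
      = dtmk A B F (FNMod A B F Nd) x x (ftmk A B F Nd x x n (A.one x)) a
        - dtmk A B F (FNMod A B F Nd) x x (ftmk A B F Nd x x n a) (A.one x) := by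
  have h : dMap A B F x Nd (ftmk A B F Nd x x n a)
      = FNsig A B F Nd x x (ftmk A B F Nd x x n a)
        - dtmk A B F (FNMod A B F Nd) x x (ftmk A B F Nd x x n a) (A.one x) := rfl
  rw [h, FNsig_mk]

theorem dMap_blin (b : B.C x) (t : FTc A B F Nd x x) :
    dMap A B F x Nd ((FNMod A B F Nd).act t (F.i x b))
      = bRmul A B F x (fun m b => (FNMod A B F Nd).act m (F.i x b)) (F.i x b)
          (dMap A B F x Nd t) := by
  refine LinearMap.congr_fun
    (f := (dMap A B F x Nd).comp (ftRmul A B F Nd (F.i x b)))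
    (g := (bRmul A B F x (fun m b => (FNMod A B F Nd).act m (F.i x b)) (F.i x b)).comp
      (dMap A B F x Nd)) (bt_hom_ext ?_) t
  intro n a
  show dMap A B F x Nd (ftRmul A B F Nd (F.i x b) (ftmk A B F Nd x x n a))
    = bRmul A B F x (fun m b => (FNMod A B F Nd).act m (F.i x b)) (F.i x b)
        (dMap A B F x Nd (ftmk A B F Nd x x n a))
  rw [ftRmul_mk, dMap_mk, dMap_mk, map_sub]
  erw [bRmul_mk, bRmul_mk, bRmul_mk A B F x (fun m b => (FNMod A B F Nd).act m (F.i x b))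
    (F.i x b) (ftmk A B F Nd x x n a) (A.one x), A.one_mul]
  have h1 : ftmk A B F Nd x x n (A.mul a (F.i x b))
      = (FNMod A B F Nd).act (ftmk A B F Nd x x n a) (F.i x b) := by
    rw [FNMod_act, ftRmul_mk]
  rw [h1, btmk_rel k (fun m b => (FNMod A B F Nd).act m (F.i x b))
    (fun (b : B.C x) (a : A.M x x) => A.mul (F.i x b) a) (ftmk A B F Nd x x n a) b (A.one x),
    A.mul_one]

/-- Bilinear version of `bRmul`. -/
def bMul {M : Type} [AddCommGroup M] [Module k M] (ρ : M → B.C x → M) :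
    BT k ρ (fun (b : B.C x) (a : A.M x x) => A.mul (F.i x b) a) →ₗ[k]
      A.M x x →ₗ[k] BT k ρ (fun (b : B.C x) (a : A.M x x) => A.mul (F.i x b) a) :=
  LinearMap.mk₂ k (fun t a => bRmul A B F x ρ a t)
    (fun t t' a => map_add _ _ _)
    (fun c t a => map_smul _ _ _)
    (fun t a a' => by
      show bRmul A B F x ρ (a + a') t = bRmul A B F x ρ a t + bRmul A B F x ρ a' t
      rw [bRmul_addr]; rfl)
    (fun c t a => by
      show bRmul A B F x ρ (c • a) t = c • bRmul A B F x ρ a t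
      rw [bRmul_smulr]; rfl)

/-- Multiplication of the last two tensor factors `N ⊗ A ⊗ A → N ⊗ A`. -/
def g0 : DTc A B F (FNMod A B F Nd) x x →ₗ[k] FTc A B F Nd x x :=
  btDesc k _ _ (bMul A B F x (fun n b => Nd.ract n b)) (by
    intro t b a
    show bRmul A B F x (fun n b => Nd.ract n b) a ((FNMod A B F Nd).act t (F.i x b))
      = bRmul A B F x (fun n b => Nd.ract n b) (A.mul (F.i x b) a) t
    erw [FNMod_act, ftRmul_eq_bRmul, bRmul_mul])

@[simp] theorem g0_mk (t : FTc A B F Nd x x) (a : A.M x x) :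
    g0 A B F x Nd (dtmk A B F (FNMod A B F Nd) x x t a)
      = bRmul A B F x (fun n b => Nd.ract n b) a t :=
  btDesc_mk k _ _ _ _ t a

/-- Multiplication of the last two tensor factors `N ⊗ A ⊗ A ⊗ A → N ⊗ A ⊗ A`. -/
def g1 : DT2c A B F (FNMod A B F Nd) x x →ₗ[k] DTc A B F (FNMod A B F Nd) x x :=
  btDesc k _ _ (bMul A B F x (fun m b => (FNMod A B F Nd).act m (F.i x b))) (by
    intro t b a
    show bRmul A B F x (fun m b => (FNMod A B F Nd).act m (F.i x b)) a
        (dtRmul A B F (FNMod A B F Nd) (F.i x b) t)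
      = bRmul A B F x (fun m b => (FNMod A B F Nd).act m (F.i x b)) (A.mul (F.i x b) a) t
    rw [dtRmul_eq_bRmul, bRmul_mul])

@[simp] theorem g1_mk (t : DTc A B F (FNMod A B F Nd) x x) (a : A.M x x) :
    g1 A B F x Nd (dt2mk A B F (FNMod A B F Nd) x x t a)
      = bRmul A B F x (fun m b => (FNMod A B F Nd).act m (F.i x b)) a t :=
  btDesc_mk k _ _ _ _ t a

/-- `η ⊗ id : N ⊗ A → N ⊗ A ⊗ A`. -/
def etaT : FTc A B F Nd x x →ₗ[k] DTc A B F (FNMod A B F Nd) x x :=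
  btMapLeft (fun n b => Nd.ract n b) (fun m b => (FNMod A B F Nd).act m (F.i x b))
    (fun (b : B.C x) (a : A.M x x) => A.mul (F.i x b) a)
    (etaLin A B F Nd x) (eta_blin A B F x Nd)

@[simp] theorem etaT_mk (n : Nd.N x) (a : A.M x x) :
    etaT A B F x Nd (ftmk A B F Nd x x n a)
      = dtmk A B F (FNMod A B F Nd) x x (ftmk A B F Nd x x n (A.one x)) a :=
  btMapLeft_mk _ _ _ _ _ n a

/-- `d ⊗ id : N ⊗ A ⊗ A → N ⊗ A ⊗ A ⊗ A`. -/
def Dm : DTc A B F (FNMod A B F Nd) x x →ₗ[k] DT2c A B F (FNMod A B F Nd) x x :=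
  btMapLeft (fun m b => (FNMod A B F Nd).act m (F.i x b))
    (fun u b => dtRmul A B F (FNMod A B F Nd) (F.i x b) u)
    (fun (b : B.C x) (a : A.M x x) => A.mul (F.i x b) a)
    (dMap A B F x Nd) (by
      intro t b
      show dMap A B F x Nd ((FNMod A B F Nd).act t (F.i x b))
        = dtRmul A B F (FNMod A B F Nd) (F.i x b) (dMap A B F x Nd t)
      erw [dMap_blin, dtRmul_eq_bRmul])

@[simp] theorem Dm_mk (t : FTc A B F Nd x x) (a : A.M x x) :
    Dm A B F x Nd (dtmk A B F (FNMod A B F Nd) x x t a)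
      = dt2mk A B F (FNMod A B F Nd) x x (dMap A B F x Nd t) a :=
  btMapLeft_mk _ _ _ _ _ t a

theorem homotopy : ∀ u : DTc A B F (FNMod A B F Nd) x x,
    u = etaT A B F x Nd (g0 A B F x Nd u) - g1 A B F x Nd (Dm A B F x Nd u) := by
  refine bt_induction ?_ ?_ ?_
  · simp only [map_zero, sub_zero]
  · intro t a
    show dtmk A B F (FNMod A B F Nd) x x t a
      = etaT A B F x Nd (g0 A B F x Nd (dtmk A B F (FNMod A B F Nd) x x t a))
        - g1 A B F x Nd (Dm A B F x Nd (dtmk A B F (FNMod A B F Nd) x x t a))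
    induction t using bt_induction with
    | h0 => erw [map_zero, LinearMap.zero_apply, sub_zero]
    | hmk n c =>
      show dtmk A B F (FNMod A B F Nd) x x (ftmk A B F Nd x x n c) a = _
      simp only [g0_mk, bRmul_mk, etaT_mk, Dm_mk, dMap_mk, map_sub, LinearMap.sub_apply,
        g1_mk, A.one_mul]
      erw [sub_sub_cancel, bRmul_mk]
      simp only [KCat.one_mul]
    | hadd s t hs ht =>
      conv_lhs => erw [map_add, LinearMap.add_apply, hs, ht]
      erw [map_add, LinearMap.add_apply]
      simp only [map_add]
      abel
  · intro s t hs ht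
    conv_lhs => rw [hs, ht]
    simp only [map_add]
    abel

theorem eta_inj (hff : LeftFaithfullyFlat B x (A.M x x)
      (fun (b : B.C x) (a : A.M x x) => A.mul (F.i x b) a)) (hNd : IsDMod Nd) :
    Function.Injective (etaLin A B F Nd x) := by
  have hρN : IsRModOver B x (Nd.N x) (fun n b => Nd.ract n b) :=
    ⟨fun n n' b => hNd.add_ract n n' b, fun n b b' => hNd.ract_add n b b',
     fun c n b => hNd.smul_ract c n b, fun c n b => hNd.ract_smul c n b,
     fun n b b' => hNd.ract_assoc n b b', fun n => hNd.ract_one n⟩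
  have hstab : ∀ m ∈ LinearMap.ker (etaLin A B F Nd x), ∀ b,
      Nd.ract m b ∈ LinearMap.ker (etaLin A B F Nd x) := by
    intro m hm b
    have hm' : etaLin A B F Nd x m = 0 := hm
    show etaLin A B F Nd x (Nd.ract m b) = 0
    rw [eta_blin A B F x Nd m b, hm', FNMod_act, map_zero]
  have hρ0 := isRModOver_sub B x hρN (LinearMap.ker (etaLin A B F Nd x)) hstab
  have hjinj := hff.1 (LinearMap.ker (etaLin A B F Nd x)) (Nd.N x)
    (fun m b => ⟨Nd.ract m.1 b, hstab m.1 m.2 b⟩) (fun n b => Nd.ract n b)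
    hρ0 hρN (LinearMap.ker (etaLin A B F Nd x)).subtype (fun m b => rfl)
    (Submodule.injective_subtype _)
  have hz1 : ∀ m : LinearMap.ker (etaLin A B F Nd x),
      btmk k (fun (m : LinearMap.ker (etaLin A B F Nd x)) b =>
          (⟨Nd.ract m.1 b, hstab m.1 m.2 b⟩ : LinearMap.ker (etaLin A B F Nd x)))
        (fun (b : B.C x) (a : A.M x x) => A.mul (F.i x b) a) m (A.one x) = 0 := by
    intro m
    apply hjinj
    erw [btMapLeft_mk, map_zero, ← etaLin_apply]
    exact LinearMap.mem_ker.mp m.2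
  have hz : ∀ s : BT k (fun (m : LinearMap.ker (etaLin A B F Nd x)) b =>
      (⟨Nd.ract m.1 b, hstab m.1 m.2 b⟩ : LinearMap.ker (etaLin A B F Nd x)))
      (fun (b : B.C x) (a : A.M x x) => A.mul (F.i x b) a), s = 0 := by
    refine bt_zero_of_gens ?_
    intro m a
    have h2 := bRmul_mk A B F x (fun (m : LinearMap.ker (etaLin A B F Nd x)) b =>
      (⟨Nd.ract m.1 b, hstab m.1 m.2 b⟩ : LinearMap.ker (etaLin A B F Nd x))) a m (A.one x)
    rw [A.one_mul] at h2
    rw [← h2, hz1, map_zero]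
  have hker := hff.2 (LinearMap.ker (etaLin A B F Nd x))
    (fun m b => ⟨Nd.ract m.1 b, hstab m.1 m.2 b⟩) hρ0 hz
  intro n n' h
  have h0 : etaLin A B F Nd x (n - n') = 0 := by rw [map_sub, h, sub_self]
  have h1 := hker ⟨n - n', LinearMap.mem_ker.mpr h0⟩
  have h2 : n - n' = 0 := congrArg Subtype.val h1
  exact sub_eq_zero.mp h2

/-- The right `B_x`-module structure on `N ⊗ A = F(N)_{xx}`. -/
theorem ρ1_mod : IsRModOver B x (FTc A B F Nd x x)
    (fun m b => (FNMod A B F Nd).act m (F.i x b)) := by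
  have h := bRmul_isRModOver A B F x (fun n b => Nd.ract n b)
  have he : (fun (m : FTc A B F Nd x x) (b : B.C x) => (FNMod A B F Nd).act m (F.i x b))
      = fun m b => bRmul A B F x (fun n b => Nd.ract n b) (F.i x b) m := by
    funext m b
    rw [FNMod_act, ftRmul_eq_bRmul]
  rw [he]
  exact h

/-- `K = ker d ⊆ N ⊗ A`. -/
def KK : Submodule k (FTc A B F Nd x x) := LinearMap.ker (dMap A B F x Nd)

theorem KK_stab : ∀ m ∈ KK A B F x Nd, ∀ b,
    (FNMod A B F Nd).act m (F.i x b) ∈ KK A B F x Nd := by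
  intro m hm b
  have hm' : dMap A B F x Nd m = 0 := hm
  show dMap A B F x Nd ((FNMod A B F Nd).act m (F.i x b)) = 0
  rw [dMap_blin, hm', map_zero]

def ρK : KK A B F x Nd → B.C x → KK A B F x Nd :=
  fun m b => ⟨(FNMod A B F Nd).act m.1 (F.i x b), KK_stab A B F x Nd m.1 m.2 b⟩

theorem ρK_mod : IsRModOver B x (KK A B F x Nd) (ρK A B F x Nd) :=
  isRModOver_sub B x (ρ1_mod A B F x Nd) _ (KK_stab A B F x Nd)

/-- The corestriction of `η` to `K`. -/
def ηK : Nd.N x →ₗ[k] KK A B F x Nd :=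
  (etaLin A B F Nd x).codRestrict (KK A B F x Nd) (fun n => by
    show dMap A B F x Nd (etaLin A B F Nd x n) = 0
    rw [etaLin_apply, dMap_mk]
    exact sub_self _)

theorem ηK_blin : ∀ (n : Nd.N x) (b : B.C x),
    ηK A B F x Nd (Nd.ract n b) = ρK A B F x Nd (ηK A B F x Nd n) b := by
  intro n b
  apply Subtype.ext
  show etaLin A B F Nd x (Nd.ract n b)
    = (FNMod A B F Nd).act (etaLin A B F Nd x n) (F.i x b)
  exact eta_blin A B F x Nd n b

/-- `R = im (η : N → K)`. -/
def RR : Submodule k (KK A B F x Nd) := LinearMap.range (ηK A B F x Nd)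

theorem RR_stab : ∀ m ∈ RR A B F x Nd, ∀ b, ρK A B F x Nd m b ∈ RR A B F x Nd := by
  intro m hm b
  obtain ⟨n, rfl⟩ := LinearMap.mem_range.mp hm
  exact LinearMap.mem_range.mpr ⟨Nd.ract n b, ηK_blin A B F x Nd n b⟩

theorem ρK_lin (b : B.C x) : IsLinearMap k (fun m : KK A B F x Nd => ρK A B F x Nd m b) := by
  constructor
  · intro m m'
    apply Subtype.ext
    exact map_add (ftRmul A B F Nd (F.i x b)) m.1 m'.1
  · intro c m
    apply Subtype.ext
    exact map_smul (ftRmul A B F Nd (F.i x b)) c m.1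

/-- The induced right `B_x`-action on `Q = K/R`. -/
def ρQ : (KK A B F x Nd ⧸ RR A B F x Nd) → B.C x → (KK A B F x Nd ⧸ RR A B F x Nd) :=
  fun q b => Submodule.mapQ (RR A B F x Nd) (RR A B F x Nd)
    (IsLinearMap.mk' _ (ρK_lin A B F x Nd b)) (fun m hm => RR_stab A B F x Nd m hm b) q

theorem ρQ_mk (m : KK A B F x Nd) (b : B.C x) :
    ρQ A B F x Nd ((RR A B F x Nd).mkQ m) b = (RR A B F x Nd).mkQ (ρK A B F x Nd m b) := by
  show Submodule.mapQ _ _ _ _ ((RR A B F x Nd).mkQ m) = _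
  erw [Submodule.mkQ_apply]

theorem ρQ_mod : IsRModOver B x (KK A B F x Nd ⧸ RR A B F x Nd) (ρQ A B F x Nd) := by
  obtain ⟨k1, k2, k3, k4, k5, k6⟩ := ρK_mod A B F x Nd
  have hs := Submodule.mkQ_surjective (RR A B F x Nd)
  refine ⟨?_, ?_, ?_, ?_, ?_, ?_⟩
  · intro q q' b
    obtain ⟨m, rfl⟩ := hs q
    obtain ⟨m', rfl⟩ := hs q'
    rw [← map_add, ρQ_mk, ρQ_mk, ρQ_mk, ← map_add]
    exact congrArg _ (k1 m m' b)
  · intro q b b'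
    obtain ⟨m, rfl⟩ := hs q
    rw [ρQ_mk, ρQ_mk, ρQ_mk, ← map_add]
    exact congrArg _ (k2 m b b')
  · intro c q b
    obtain ⟨m, rfl⟩ := hs q
    rw [show c • (RR A B F x Nd).mkQ m = (RR A B F x Nd).mkQ (c • m) from
      (map_smul _ c m).symm, ρQ_mk, ρQ_mk, ← map_smul]
    exact congrArg _ (k3 c m b)
  · intro c q b
    obtain ⟨m, rfl⟩ := hs q
    rw [ρQ_mk, ρQ_mk, ← map_smul]
    exact congrArg _ (k4 c m b)
  · intro q b b'
    obtain ⟨m, rfl⟩ := hs q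
    rw [ρQ_mk, ρQ_mk, ρQ_mk]
    exact congrArg _ (k5 m b b')
  · intro q
    obtain ⟨m, rfl⟩ := hs q
    rw [ρQ_mk]
    exact congrArg _ (k6 m)

/-- `mkQ ⊗ id : K ⊗ A → Q ⊗ A`. -/
def πQ : BT k (ρK A B F x Nd) (fun (b : B.C x) (a : A.M x x) => A.mul (F.i x b) a) →ₗ[k]
    BT k (ρQ A B F x Nd) (fun (b : B.C x) (a : A.M x x) => A.mul (F.i x b) a) :=
  btMapLeft _ _ _ (RR A B F x Nd).mkQ (fun m b => (ρQ_mk A B F x Nd m b).symm)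

@[simp] theorem πQ_mk (m : KK A B F x Nd) (a : A.M x x) :
    πQ A B F x Nd (btmk k (ρK A B F x Nd)
        (fun (b : B.C x) (a : A.M x x) => A.mul (F.i x b) a) m a)
      = btmk k (ρQ A B F x Nd) (fun (b : B.C x) (a : A.M x x) => A.mul (F.i x b) a)
          ((RR A B F x Nd).mkQ m) a :=
  btMapLeft_mk _ _ _ _ _ m a

/-- `incl ⊗ id : K ⊗ A → (N ⊗ A) ⊗ A`. -/
def jK : BT k (ρK A B F x Nd) (fun (b : B.C x) (a : A.M x x) => A.mul (F.i x b) a) →ₗ[k]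
    DTc A B F (FNMod A B F Nd) x x :=
  btMapLeft (ρK A B F x Nd) (fun m b => (FNMod A B F Nd).act m (F.i x b))
    (fun (b : B.C x) (a : A.M x x) => A.mul (F.i x b) a)
    (KK A B F x Nd).subtype (fun m b => rfl)

@[simp] theorem jK_mk (m : KK A B F x Nd) (a : A.M x x) :
    jK A B F x Nd (btmk k (ρK A B F x Nd)
        (fun (b : B.C x) (a : A.M x x) => A.mul (F.i x b) a) m a)
      = dtmk A B F (FNMod A B F Nd) x x m.1 a :=
  btMapLeft_mk _ _ _ _ _ m a

/-- `ηK ⊗ id : N ⊗ A → K ⊗ A`. -/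
def ψK : FTc A B F Nd x x →ₗ[k]
    BT k (ρK A B F x Nd) (fun (b : B.C x) (a : A.M x x) => A.mul (F.i x b) a) :=
  btMapLeft (fun n b => Nd.ract n b) (ρK A B F x Nd)
    (fun (b : B.C x) (a : A.M x x) => A.mul (F.i x b) a)
    (ηK A B F x Nd) (ηK_blin A B F x Nd)

@[simp] theorem ψK_mk (n : Nd.N x) (a : A.M x x) :
    ψK A B F x Nd (ftmk A B F Nd x x n a)
      = btmk k (ρK A B F x Nd) (fun (b : B.C x) (a : A.M x x) => A.mul (F.i x b) a)
          (ηK A B F x Nd n) a :=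
  btMapLeft_mk _ _ _ _ _ n a

theorem jψ_eq (v : FTc A B F Nd x x) :
    jK A B F x Nd (ψK A B F x Nd v) = etaT A B F x Nd v := by
  refine LinearMap.congr_fun (f := (jK A B F x Nd).comp (ψK A B F x Nd))
    (g := etaT A B F x Nd) (bt_hom_ext ?_) v
  intro n a
  show jK A B F x Nd (ψK A B F x Nd (ftmk A B F Nd x x n a))
    = etaT A B F x Nd (ftmk A B F Nd x x n a)
  rw [ψK_mk, jK_mk, etaT_mk]
  rfl

theorem piψ_zero (v : FTc A B F Nd x x) : πQ A B F x Nd (ψK A B F x Nd v) = 0 := by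
  refine LinearMap.congr_fun (f := (πQ A B F x Nd).comp (ψK A B F x Nd))
    (g := 0) (bt_hom_ext ?_) v
  intro n a
  show πQ A B F x Nd (ψK A B F x Nd (ftmk A B F Nd x x n a)) = 0
  rw [ψK_mk, πQ_mk]
  have hz : (RR A B F x Nd).mkQ (ηK A B F x Nd n) = 0 :=
    (Submodule.Quotient.mk_eq_zero _).mpr (LinearMap.mem_range_self _ n)
  rw [hz, map_zero, LinearMap.zero_apply]

theorem pi_gen_zero (hff : LeftFaithfullyFlat B x (A.M x x)
      (fun (b : B.C x) (a : A.M x x) => A.mul (F.i x b) a))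
    (m : KK A B F x Nd) (a : A.M x x) :
    πQ A B F x Nd (btmk k (ρK A B F x Nd)
      (fun (b : B.C x) (a : A.M x x) => A.mul (F.i x b) a) m a) = 0 := by
  have hjinj : Function.Injective (jK A B F x Nd) :=
    hff.1 (KK A B F x Nd) (FTc A B F Nd x x) (ρK A B F x Nd)
      (fun m b => (FNMod A B F Nd).act m (F.i x b)) (ρK_mod A B F x Nd) (ρ1_mod A B F x Nd)
      (KK A B F x Nd).subtype (fun m b => rfl) (Submodule.injective_subtype _)
  have hu := homotopy A B F x Nd (dtmk A B F (FNMod A B F Nd) x x m.1 a)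
  have hD : Dm A B F x Nd (dtmk A B F (FNMod A B F Nd) x x m.1 a) = 0 := by
    rw [Dm_mk, LinearMap.mem_ker.mp m.2, map_zero, LinearMap.zero_apply]
  rw [hD, map_zero, sub_zero] at hu
  have heq : btmk k (ρK A B F x Nd)
      (fun (b : B.C x) (a : A.M x x) => A.mul (F.i x b) a) m a
      = ψK A B F x Nd (g0 A B F x Nd (dtmk A B F (FNMod A B F Nd) x x m.1 a)) := by
    apply hjinj
    rw [jK_mk, jψ_eq]
    exact hu
  rw [heq, piψ_zero]

theorem q_gens_zero (hff : LeftFaithfullyFlat B x (A.M x x)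
      (fun (b : B.C x) (a : A.M x x) => A.mul (F.i x b) a)) :
    ∀ s : BT k (ρQ A B F x Nd)
      (fun (b : B.C x) (a : A.M x x) => A.mul (F.i x b) a), s = 0 := by
  refine bt_zero_of_gens ?_
  intro q a
  obtain ⟨m, rfl⟩ := Submodule.mkQ_surjective (RR A B F x Nd) q
  rw [← πQ_mk]
  exact pi_gen_zero A B F x Nd hff m a

theorem eta_surj (hff : LeftFaithfullyFlat B x (A.M x x)
      (fun (b : B.C x) (a : A.M x x) => A.mul (F.i x b) a))
    (t : FTc A B F Nd x x) (ht : dMap A B F x Nd t = 0) :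
    ∃ n, etaLin A B F Nd x n = t := by
  have hall := hff.2 (KK A B F x Nd ⧸ RR A B F x Nd) (ρQ A B F x Nd) (ρQ_mod A B F x Nd)
    (q_gens_zero A B F x Nd hff)
  have htK : t ∈ KK A B F x Nd := LinearMap.mem_ker.mpr ht
  have h0 := hall ((RR A B F x Nd).mkQ ⟨t, htK⟩)
  have hmem : (⟨t, htK⟩ : KK A B F x Nd) ∈ RR A B F x Nd :=
    (Submodule.Quotient.mk_eq_zero _).mp h0
  obtain ⟨n, hn⟩ := LinearMap.mem_range.mp hmem
  exact ⟨n, congrArg Subtype.val hn⟩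

end Stmt2Aux

/-- Proposition 2.4: if `A_{xx}` is faithfully flat as a left
`B_x`-module, then for every diagonal right `B`-module `N` the unit
`η^N_x : N_x → GF(N)_x`, `n ↦ n ⊗ 1_x`, is bijective. -/
theorem stmt2 {k X : Type} [CommRing k] (A : KCat k X) (B : DiagAlg k X) (F : XFun B A)
    (x : X)
    (hff : LeftFaithfullyFlat B x (A.M x x)
      (fun (b : B.C x) (a : A.M x x) => A.mul (F.i x b) a))
    (Nd : DModData B) (hNd : IsDMod Nd) :
    Function.Bijective (fun n : Nd.N x =>
      (⟨etaMap A B F Nd x n, rfl⟩ : {t // t ∈ Gset A B F (FNDesc A B F Nd) x})) := by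
  constructor
  · intro n n' h
    have h2 : etaLin A B F Nd x n = etaLin A B F Nd x n' := congrArg Subtype.val h
    exact eta_inj A B F x Nd hff hNd h2
  · rintro ⟨t, ht⟩
    have ht' : dMap A B F x Nd t = 0 := by
      show FNsig A B F Nd x x t - dOne A B F x Nd t = 0
      rw [sub_eq_zero]
      exact ht
    obtain ⟨n, hn⟩ := eta_surj A B F x Nd hff t ht'
    exact ⟨n, Subtype.ext (show etaMap A B F Nd x n = t from hn)⟩

end Paper
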